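/- Let σ = (σ_1, …, σ_r) ∈ ℤ^r be a very slack changemaker vector and let m be the minimal index with σ_m > 1. Then for every index k with σ_k > 1 there exists a subset A ⊆ {1, …, k−1} such that σ_k = Σ_{i∈A} σ_i and 1 ≤ |A ∩ {1, …, m−1}| ≤ m − 2. -/

import Mathlib

/-- The standard dot product on `ℤ^s`. -/
def dotInt {s : ℕ} (x y : Fin s → ℤ) : ℤ := ∑ i, x i * y i

/-- `σ` is a changemaker vector: `σ 0 = 1` (the first coordinate, 1-based `σ_1`) and
`σ_{i-1} ≤ σ_i ≤ 1 + σ_1 + ⋯ + σ_{i-1}` for all later coordinates. -/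
def IsChangemaker {r : ℕ} (σ : Fin r → ℤ) : Prop :=
  (∀ i : Fin r, i.val = 0 → σ i = 1) ∧
  ∀ i : Fin r, 0 < i.val →
    σ ⟨i.val - 1, lt_of_le_of_lt (Nat.sub_le _ _) i.isLt⟩ ≤ σ i ∧
    σ i ≤ 1 + ∑ j ∈ Finset.univ.filter (fun j : Fin r => j < i), σ j

/-- `v` is an obtuse superbase of the sublattice `L ⊆ ℤ^s`: all its members lie in `L`,
they span `L` over `ℤ`, they have pairwise nonpositive dot products, and they sum to zero. -/
def IsObtuseSuperbase {s d : ℕ} (L : Set (Fin s → ℤ)) (v : Fin d → (Fin s → ℤ)) : Prop :=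
  (∀ i, v i ∈ L) ∧
  (∀ x ∈ L, x ∈ Submodule.span ℤ (Set.range v)) ∧
  (∀ i j, i ≠ j → dotInt (v i) (v j) ≤ 0) ∧
  (∑ i, v i) = 0

/-- `v` is a nonzero vector of the changemaker lattice `⟨σ⟩^⊥` which is irreducible:
whenever `v = x + y` with `x, y` nonzero members of the lattice, `x · y ≤ -1`. -/
def IsIrreducibleVec {r : ℕ} (σ : Fin r → ℤ) (v : Fin r → ℤ) : Prop :=
  v ≠ 0 ∧ ∀ x y : Fin r → ℤ, dotInt σ x = 0 → dotInt σ y = 0 → x ≠ 0 → y ≠ 0 →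
    x + y = v → dotInt x y ≤ -1

/-- A changemaker vector is tight if some coefficient `σ_k` (with `k ≥ 2`, 1-based)
equals `1 + σ_1 + ⋯ + σ_{k-1}`. -/
def IsTightCM {r : ℕ} (σ : Fin r → ℤ) : Prop :=
  ∃ k : Fin r, 0 < k.val ∧
    σ k = 1 + ∑ j ∈ Finset.univ.filter (fun j : Fin r => j < k), σ j

/-- A changemaker vector is very slack if its last coordinate is at least `2` and
`σ_k ≤ σ_1 + ⋯ + σ_{k-1} - 1` for every `k` with `σ_k > 1`. -/
def IsVerySlack {r : ℕ} (σ : Fin r → ℤ) : Prop :=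
  IsChangemaker σ ∧ (∀ i : Fin r, i.val = r - 1 → 2 ≤ σ i) ∧
  ∀ k : Fin r, 1 < σ k →
    σ k ≤ (∑ j ∈ Finset.univ.filter (fun j : Fin r => j < k), σ j) - 1

/-- The set of indices `i` with `1 ≤ i < t` (as a subset of `Fin r`). -/
def cmF (r t : ℕ) : Finset (Fin r) := Finset.univ.filter (fun i => 0 < i.val ∧ i.val < t)

lemma cm_one_le {r : ℕ} {σ : Fin r → ℤ} (hcm : IsChangemaker σ) : ∀ i, 1 ≤ σ i := by
  suffices h : ∀ n : ℕ, ∀ i : Fin r, i.val = n → 1 ≤ σ i from fun i => h i.val i rfl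
  intro n
  induction n with
  | zero => intro i h; exact (hcm.1 i h).ge
  | succ n ih =>
      intro i h
      have h2 := (hcm.2 i (by omega)).1
      exact le_trans (ih _ (by simp; omega)) h2

lemma cm_mono {r : ℕ} {σ : Fin r → ℤ} (hcm : IsChangemaker σ) :
    ∀ i j : Fin r, i ≤ j → σ i ≤ σ j := by
  suffices h : ∀ n : ℕ, ∀ j : Fin r, j.val = n → ∀ i, i ≤ j → σ i ≤ σ j by
    intro i j hij; exact h j.val j rfl i hij
  intro n
  induction n with
  | zero =>
      intro j hj i hij
      have hij' := Fin.le_def.mp hij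
      have : i = j := Fin.ext (by omega)
      rw [this]
  | succ n ih =>
      intro j hj i hij
      rcases eq_or_lt_of_le hij with rfl | hlt
      · exact le_refl _
      · have hlt' := Fin.lt_def.mp hlt
        have h2 := (hcm.2 j (by omega)).1
        refine le_trans (ih ⟨j.val - 1, by have := j.isLt; omega⟩ (by simp; omega) i
          (Fin.le_def.mpr (by simp; omega))) h2

lemma cm_small_one {r : ℕ} {σ : Fin r → ℤ} (hcm : IsChangemaker σ) {m : Fin r}
    (hmin : ∀ j : Fin r, j < m → ¬ 1 < σ j) {i : Fin r} (hi : i < m) : σ i = 1 :=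
  le_antisymm (by have := hmin i hi; omega) (cm_one_le hcm i)

lemma cmF_succ {r t : ℕ} (h0 : 0 < t) (ht : t < r) :
    cmF r (t + 1) = insert ⟨t, ht⟩ (cmF r t) := by
  ext i
  simp only [cmF, Finset.mem_filter, Finset.mem_univ, true_and, Finset.mem_insert, Fin.ext_iff]
  omega

lemma cm_sum_split {r : ℕ} {σ : Fin r → ℤ} (hcm : IsChangemaker σ) (k : Fin r)
    (h0 : 0 < k.val) :
    (∑ j ∈ Finset.univ.filter (fun j : Fin r => j < k), σ j) = 1 + ∑ i ∈ cmF r k.val, σ i := by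
  have hr : 0 < r := lt_of_le_of_lt (Nat.zero_le _) k.isLt
  have h1 : Finset.univ.filter (fun j : Fin r => j < k) = insert ⟨0, hr⟩ (cmF r k.val) := by
    ext i
    simp only [cmF, Finset.mem_filter, Finset.mem_univ, true_and, Finset.mem_insert,
      Fin.ext_iff, Fin.lt_def]
    omega
  rw [h1, Finset.sum_insert (by simp [cmF]), hcm.1 _ rfl]

lemma cm_small_sum {r : ℕ} {σ : Fin r → ℤ} (hcm : IsChangemaker σ) {m : Fin r}
    (hmin : ∀ j : Fin r, j < m → ¬ 1 < σ j) :
    ∀ t : ℕ, 0 < t → t ≤ m.val →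
      (cmF r t).card = t - 1 ∧ (∑ i ∈ cmF r t, σ i) = (t : ℤ) - 1 := by
  intro t
  induction t with
  | zero => intro h; omega
  | succ t ih =>
      intro _ htm
      rcases Nat.eq_zero_or_pos t with rfl | h0
      · have he : cmF r 1 = ∅ := by
          ext i; simp only [cmF, Finset.mem_filter, Finset.mem_univ, true_and,
            Finset.notMem_empty, iff_false]; omega
        simp [he]
      · have ht : t < r := by have := m.isLt; omega
        have hins := cmF_succ h0 ht
        have hnot : (⟨t, ht⟩ : Fin r) ∉ cmF r t := by simp [cmF]
        obtain ⟨hc, hs⟩ := ih h0 (by omega)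
        have hσ : σ ⟨t, ht⟩ = 1 :=
          cm_small_one hcm hmin (show (⟨t, ht⟩ : Fin r) < m from Fin.lt_def.mpr (by simp; omega))
        constructor
        · rw [hins, Finset.card_insert_of_notMem hnot, hc]; omega
        · rw [hins, Finset.sum_insert hnot, hσ, hs]; push_cast; ring

lemma cm_greedy {r : ℕ} {σ : Fin r → ℤ} (hvs : IsVerySlack σ) {m : Fin r}
    (hm : 1 < σ m) (hmin : ∀ j : Fin r, j < m → ¬ 1 < σ j) :
    ∀ d : ℕ, m.val + d ≤ r → ∀ n : ℤ, 0 ≤ n →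
      n ≤ (∑ i ∈ cmF r (m.val + d), σ i) - 1 →
      ∃ B : Finset (Fin r), (∀ i ∈ B, m.val ≤ i.val ∧ i.val < m.val + d) ∧
        (∑ i ∈ B, σ i) ≤ n ∧ n - (∑ i ∈ B, σ i) ≤ (m.val : ℤ) - 2 := by
  obtain ⟨hcm, _, hslack⟩ := hvs
  have h0m : 0 < m.val := by
    rcases Nat.eq_zero_or_pos m.val with h | h
    · have := hcm.1 m h; omega
    · exact h
  intro d
  induction d with
  | zero =>
      intro _ n hn0 hn
      obtain ⟨_, hs⟩ := cm_small_sum hcm hmin m.val h0m le_rfl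
      rw [Nat.add_zero, hs] at hn
      exact ⟨∅, by simp, by simpa using hn0, by simpa using by linarith⟩
  | succ d ih =>
      intro hdr n hn0 hn
      have ht : m.val + d < r := by omega
      have h0t : 0 < m.val + d := by omega
      have hins : cmF r (m.val + (d + 1)) = insert ⟨m.val + d, ht⟩ (cmF r (m.val + d)) :=
        cmF_succ h0t ht
      have hnot : (⟨m.val + d, ht⟩ : Fin r) ∉ cmF r (m.val + d) := by simp [cmF]
      have hsum : (∑ i ∈ cmF r (m.val + (d + 1)), σ i)
          = σ ⟨m.val + d, ht⟩ + ∑ i ∈ cmF r (m.val + d), σ i := by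
        rw [hins, Finset.sum_insert hnot]
      have hmt : σ m ≤ σ ⟨m.val + d, ht⟩ :=
        cm_mono hcm m ⟨m.val + d, ht⟩ (Fin.le_def.mpr (by simp))
      rw [hsum] at hn
      by_cases hc : σ ⟨m.val + d, ht⟩ ≤ n
      · obtain ⟨B, hB1, hB2, hB3⟩ := ih (by omega) (n - σ ⟨m.val + d, ht⟩)
          (by linarith) (by linarith)
        have hnotB : (⟨m.val + d, ht⟩ : Fin r) ∉ B := fun h => absurd (hB1 _ h).2 (by simp)
        refine ⟨insert ⟨m.val + d, ht⟩ B, ?_, ?_, ?_⟩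
        · intro i hi
          rcases Finset.mem_insert.mp hi with rfl | hi
          · exact ⟨Nat.le_add_right _ _, Nat.lt_succ_self _⟩
          · have := hB1 i hi; omega
        · rw [Finset.sum_insert hnotB]; linarith
        · rw [Finset.sum_insert hnotB]; linarith
      · push_neg at hc
        have h1 : 1 < σ ⟨m.val + d, ht⟩ := by linarith
        have hsl := hslack ⟨m.val + d, ht⟩ h1
        have hsplit : (∑ j ∈ Finset.univ.filter (fun j : Fin r => j < (⟨m.val + d, ht⟩ : Fin r)), σ j)
            = 1 + ∑ i ∈ cmF r (m.val + d), σ i := cm_sum_split hcm ⟨m.val + d, ht⟩ h0t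
        rw [hsplit] at hsl
        obtain ⟨B, hB1, hB2, hB3⟩ := ih (by omega) n hn0 (by linarith)
        exact ⟨B, fun i hi => by have := hB1 i hi; omega, hB2, hB3⟩

theorem very_slack_changemaker_condition
    (r : ℕ) (hr : 0 < r) (σ : Fin r → ℤ) (hvs : IsVerySlack σ)
    (m : Fin r) (hm : 1 < σ m) (hmin : ∀ j : Fin r, j < m → ¬ 1 < σ j) :
    ∀ k : Fin r, 1 < σ k →
      ∃ A : Finset (Fin r), (∀ i ∈ A, i < k) ∧ σ k = ∑ i ∈ A, σ i ∧
        1 ≤ (A.filter (fun i => i < m)).card ∧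
        (A.filter (fun i => i < m)).card ≤ m.val - 1 := by
  intro k hk
  have hcm := hvs.1
  have h0m : 0 < m.val := by
    rcases Nat.eq_zero_or_pos m.val with h | h
    · have := hcm.1 m h; omega
    · exact h
  have hmk : m.val ≤ k.val := by
    by_contra h
    push_neg at h
    exact hmin k (Fin.lt_def.mpr h) hk
  have h0k : 0 < k.val := by omega
  obtain ⟨hcard, hssum⟩ := cm_small_sum hcm hmin m.val h0m le_rfl
  have hm3 : 3 ≤ m.val := by
    have hsl := hvs.2.2 m hm
    rw [cm_sum_split hcm m h0m, hssum] at hsl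
    omega
  -- greedy over [m, k)
  have hkv : m.val + (k.val - m.val) = k.val := by omega
  have hslk := hvs.2.2 k hk
  rw [cm_sum_split hcm k h0k] at hslk
  obtain ⟨B, hB1, hB2, hB3⟩ := cm_greedy hvs hm hmin (k.val - m.val)
    (by have := k.isLt; omega) (σ k - 1) (by omega)
    (by rw [hkv]; linarith)
  rw [hkv] at hB1
  set n' : ℤ := σ k - 1 - ∑ i ∈ B, σ i with hn'
  have hn'0 : 0 ≤ n' := by omega
  have hn'2 : n' ≤ (m.val : ℤ) - 2 := hB3
  set c : ℕ := n'.toNat with hcdef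
  have hcm2 : c ≤ m.val - 2 := by omega
  obtain ⟨C, hCsub, hCcard⟩ := Finset.exists_subset_card_eq (show c ≤ (cmF r m.val).card by rw [hcard]; omega)
  have hCm : ∀ i ∈ C, i < m := by
    intro i hi
    have := Finset.mem_filter.mp (hCsub hi)
    exact Fin.lt_def.mpr this.2.2
  have hCsum : (∑ i ∈ C, σ i) = (c : ℤ) := by
    rw [Finset.sum_congr rfl (fun i hi => cm_small_one hcm hmin (hCm i hi))]
    simp [hCcard]
  set z : Fin r := ⟨0, hr⟩ with hzdef
  have hzC : z ∉ C := by
    intro h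
    have := (Finset.mem_filter.mp (hCsub h)).2.1
    simp [hzdef] at this
  have hzB : z ∉ B := by
    intro h
    have := (hB1 z h).1
    simp [hzdef] at this
    omega
  have hCB : Disjoint C B := by
    rw [Finset.disjoint_left]
    intro i hiC hiB
    have h1 := (Finset.mem_filter.mp (hCsub hiC)).2.2
    have h2 := (hB1 i hiB).1
    omega
  have hzCB : z ∉ C ∪ B := by
    rw [Finset.mem_union]
    rintro (h | h)
    exacts [hzC h, hzB h]
  refine ⟨insert z (C ∪ B), ?_, ?_, ?_, ?_⟩
  · intro i hi
    rcases Finset.mem_insert.mp hi with rfl | hi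
    · exact Fin.lt_def.mpr (by simp [hzdef]; omega)
    · rcases Finset.mem_union.mp hi with h | h
      · exact lt_of_lt_of_le (hCm i h) (Fin.le_def.mpr hmk)
      · exact Fin.lt_def.mpr (hB1 i h).2
  · rw [Finset.sum_insert hzCB, Finset.sum_union hCB, hcm.1 z rfl, hCsum]
    have : (c : ℤ) = n' := Int.toNat_of_nonneg hn'0
    omega
  all_goals {
    have hfA : (insert z (C ∪ B)).filter (fun i => i < m) = insert z C := by
      ext i
      simp only [Finset.mem_filter, Finset.mem_insert, Finset.mem_union]
      constructor
      · rintro ⟨h1 | h1 | h1, h2⟩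
        · exact Or.inl h1
        · exact Or.inr h1
        · have := (hB1 i h1).1
          rw [Fin.lt_def] at h2
          omega
      · rintro (rfl | h1)
        · exact ⟨Or.inl rfl, Fin.lt_def.mpr (by simp [hzdef]; omega)⟩
        · exact ⟨Or.inr (Or.inl h1), hCm i h1⟩
    rw [hfA, Finset.card_insert_of_notMem hzC, hCcard]
    omega
  }
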